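/- Let ρ : ℕ → ℝ satisfy |ρ(t)| ≤ 1 for all t and ρ(t) → 0 as t → ∞. Let c : ℕ → ℝ satisfy ∑_{k} c_k² < ∞, and let k⋆ ≥ 1 be the smallest positive index with c_{k⋆} ≠ 0. Define ρ_U(t) := ∑_{k ≥ k⋆} c_k² · ρ(t)^k (the series converges absolutely for each t). Then the function t ↦ |ρ_U(t)| is summable over ℕ if and only if the function t ↦ |ρ(t)|^{k⋆} is summable over ℕ. -/

import Mathlib

set_option maxHeartbeats 1000000


/-- Lemma 4.3 (free setting): with `ρ_U(t) = ∑_{k ≥ k⋆} c_k² ρ(t)^k`, where `k⋆ ≥ 1` is the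
Chebyshev rank (the smallest positive index with `c_{k⋆} ≠ 0`), the covariance `ρ_U` is
absolutely summable iff `∑_t |ρ(t)|^{k⋆} < ∞`. -/
theorem summable_rhoU_iff_summable_pow_rank
    (ρ : ℕ → ℝ) (hρ1 : ∀ t, |ρ t| ≤ 1) (hρ0 : Filter.Tendsto ρ Filter.atTop (nhds 0))
    (c : ℕ → ℝ) (hc : Summable fun k => c k ^ 2)
    (ks : ℕ) (hks1 : 1 ≤ ks) (hcks : c ks ≠ 0)
    (hmin : ∀ k, 1 ≤ k → k < ks → c k = 0)
    (ρU : ℕ → ℝ)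
    (hρU : ∀ t, ρU t = ∑' k : ℕ, c (ks + k) ^ 2 * ρ t ^ (ks + k)) :
    (Summable fun t => |ρU t|) ↔ Summable fun t => |ρ t| ^ ks := by
  have ha0 : 0 < c ks ^ 2 := by positivity
  set a : ℝ := c ks ^ 2 with ha
  have hshift : Summable fun k => c (ks + k) ^ 2 := by
    have h := (summable_nat_add_iff ks).2 hc
    simpa [add_comm] using h
  have hshift1 : Summable fun k => c (ks + 1 + k) ^ 2 := by
    have h := (summable_nat_add_iff (ks + 1)).2 hc
    have e : ∀ k, k + (ks + 1) = ks + 1 + k := fun k => by omega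
    simpa [e] using h
  set C : ℝ := ∑' k, c (ks + k) ^ 2 with hCdef
  set D : ℝ := ∑' k, c (ks + 1 + k) ^ 2 with hDdef
  have hC0 : 0 ≤ C := tsum_nonneg fun k => sq_nonneg _
  have hD0 : 0 ≤ D := tsum_nonneg fun k => sq_nonneg _
  -- per-t absolute summability
  have hsumabs : ∀ t, Summable fun k => c (ks + k) ^ 2 * |ρ t| ^ (ks + k) := by
    intro t
    apply Summable.of_nonneg_of_le (fun k => by positivity) _ hshift
    intro k
    calc c (ks + k) ^ 2 * |ρ t| ^ (ks + k) ≤ c (ks + k) ^ 2 * 1 := by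
          gcongr
          exact pow_le_one₀ (abs_nonneg _) (hρ1 t)
      _ = c (ks + k) ^ 2 := mul_one _
  have habs : ∀ t k, |c (ks + k) ^ 2 * ρ t ^ (ks + k)| = c (ks + k) ^ 2 * |ρ t| ^ (ks + k) := by
    intro t k
    simp [abs_mul, abs_pow, sq_abs]
  have hsum : ∀ t, Summable fun k => c (ks + k) ^ 2 * ρ t ^ (ks + k) := by
    intro t
    apply Summable.of_abs
    simpa [habs t] using hsumabs t
  have hsumabs1 : ∀ t, Summable fun k => c (ks + 1 + k) ^ 2 * |ρ t| ^ (ks + 1 + k) := by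
    intro t
    apply Summable.of_nonneg_of_le (fun k => by positivity) _ hshift1
    intro k
    calc c (ks + 1 + k) ^ 2 * |ρ t| ^ (ks + 1 + k) ≤ c (ks + 1 + k) ^ 2 * 1 := by
          gcongr
          exact pow_le_one₀ (abs_nonneg _) (hρ1 t)
      _ = c (ks + 1 + k) ^ 2 := mul_one _
  -- upper bound
  have hupper : ∀ t, |ρU t| ≤ C * |ρ t| ^ ks := by
    intro t
    rw [hρU t]
    calc |∑' k, c (ks + k) ^ 2 * ρ t ^ (ks + k)|
        ≤ ∑' k, c (ks + k) ^ 2 * |ρ t| ^ (ks + k) := by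
          have hns : Summable fun k => ‖c (ks + k) ^ 2 * ρ t ^ (ks + k)‖ := by
            simpa [Real.norm_eq_abs, habs t] using hsumabs t
          simpa [Real.norm_eq_abs, habs t] using norm_tsum_le_tsum_norm hns
      _ ≤ ∑' k, c (ks + k) ^ 2 * |ρ t| ^ ks := by
          apply Summable.tsum_le_tsum _ (hsumabs t) (hshift.mul_right _)
          intro k
          exact mul_le_mul_of_nonneg_left
            (pow_le_pow_of_le_one (abs_nonneg _) (hρ1 t) (by omega)) (sq_nonneg _)
      _ = C * |ρ t| ^ ks := tsum_mul_right
  -- lower bound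
  have hlow : ∀ t, a * |ρ t| ^ ks - D * (|ρ t| ^ ks * |ρ t|) ≤ |ρU t| := by
    intro t
    have hsplit : ρU t = c ks ^ 2 * ρ t ^ ks
        + ∑' k, c (ks + 1 + k) ^ 2 * ρ t ^ (ks + 1 + k) := by
      rw [hρU t, Summable.tsum_eq_zero_add (hsum t)]
      have h1 : c (ks + 0) ^ 2 * ρ t ^ (ks + 0) = c ks ^ 2 * ρ t ^ ks := by norm_num
      rw [h1]
      congr 1
      exact tsum_congr fun k => by rw [show ks + (k + 1) = ks + 1 + k from by omega]
    have htail : |∑' k, c (ks + 1 + k) ^ 2 * ρ t ^ (ks + 1 + k)|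
        ≤ D * (|ρ t| ^ ks * |ρ t|) := by
      have habs1 : ∀ k, |c (ks + 1 + k) ^ 2 * ρ t ^ (ks + 1 + k)|
          = c (ks + 1 + k) ^ 2 * |ρ t| ^ (ks + 1 + k) := by
        intro k
        simp [abs_mul, abs_pow, sq_abs]
      calc |∑' k, c (ks + 1 + k) ^ 2 * ρ t ^ (ks + 1 + k)|
          ≤ ∑' k, c (ks + 1 + k) ^ 2 * |ρ t| ^ (ks + 1 + k) := by
            have hns : Summable fun k => ‖c (ks + 1 + k) ^ 2 * ρ t ^ (ks + 1 + k)‖ := by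
              simpa [Real.norm_eq_abs, habs1] using hsumabs1 t
            simpa [Real.norm_eq_abs, habs1] using norm_tsum_le_tsum_norm hns
        _ ≤ ∑' k, c (ks + 1 + k) ^ 2 * |ρ t| ^ (ks + 1) := by
            apply Summable.tsum_le_tsum _ (hsumabs1 t) (hshift1.mul_right _)
            intro k
            exact mul_le_mul_of_nonneg_left
              (pow_le_pow_of_le_one (abs_nonneg _) (hρ1 t) (by omega)) (sq_nonneg _)
        _ = D * |ρ t| ^ (ks + 1) := tsum_mul_right
        _ = D * (|ρ t| ^ ks * |ρ t|) := by ring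
    have h1 : a * |ρ t| ^ ks = |c ks ^ 2 * ρ t ^ ks| := by
      simp [abs_mul, abs_pow, sq_abs, ha]
    have h2 : |c ks ^ 2 * ρ t ^ ks|
        ≤ |ρU t| + |∑' k, c (ks + 1 + k) ^ 2 * ρ t ^ (ks + 1 + k)| := by
      have : c ks ^ 2 * ρ t ^ ks
          = ρU t - ∑' k, c (ks + 1 + k) ^ 2 * ρ t ^ (ks + 1 + k) := by
        rw [hsplit]; ring
      rw [this]
      exact abs_sub _ _
    have := h2.trans (by linarith [htail] : |ρU t| + |∑' k, c (ks + 1 + k) ^ 2 * ρ t ^ (ks + 1 + k)| ≤ |ρU t| + D * (|ρ t| ^ ks * |ρ t|))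
    linarith [h1 ▸ this]
  constructor
  · -- forward
    intro hU
    have hε : (0:ℝ) < a / (2 * (D + 1)) := by positivity
    have hev : ∀ᶠ t in Filter.atTop, |ρ t| ≤ a / (2 * (D + 1)) := by
      have habsρ : Filter.Tendsto (fun t => |ρ t|) Filter.atTop (nhds 0) := by
        simpa using hρ0.abs
      exact (habsρ.eventually_le_const hε)
    obtain ⟨N, hN⟩ := Filter.eventually_atTop.1 hev
    have hkey : ∀ t, N ≤ t → a / 2 * |ρ t| ^ ks ≤ |ρU t| := by
      intro t ht
      have h1 := hlow t
      have h2 : D * (|ρ t| ^ ks * |ρ t|) ≤ a / 2 * |ρ t| ^ ks := by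
        have h3 : |ρ t| ≤ a / (2 * (D + 1)) := hN t ht
        have h4 : D * |ρ t| ≤ a / 2 := by
          calc D * |ρ t| ≤ (D + 1) * (a / (2 * (D + 1))) := by
                apply mul_le_mul (by linarith) h3 (abs_nonneg _) (by linarith)
            _ = a / 2 := by field_simp
        calc D * (|ρ t| ^ ks * |ρ t|) = (D * |ρ t|) * |ρ t| ^ ks := by ring
          _ ≤ (a / 2) * |ρ t| ^ ks := by
              apply mul_le_mul_of_nonneg_right h4 (by positivity)
      linarith
    rw [← summable_nat_add_iff N]
    have hUs : Summable fun t => 2 / a * |ρU (t + N)| :=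
      ((summable_nat_add_iff N).2 hU).mul_left _
    apply Summable.of_nonneg_of_le (fun t => by positivity) _ hUs
    intro t
    have h := hkey (t + N) (Nat.le_add_left N t)
    rw [div_mul_eq_mul_div, le_div_iff₀ ha0]
    nlinarith [h]
  · -- backward
    intro hr
    apply Summable.of_nonneg_of_le (fun t => abs_nonneg _) hupper
    exact hr.mul_left C
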